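/- Let (G,c,R) be a Steiner tree instance and M its canonical merge plan. Then for every nonempty X ⊆ R, drop_G(X) = 2 · value(M, X), where drop_G(X) = TMST_G − TMST_{G/X} and value(M, X) = ∫_0^∞ (|{S ∈ S^t : S ∩ X ≠ ∅}| − 1) dt is the local value of X. -/

import Mathlib

set_option linter.unusedSectionVars false
set_option linter.unusedVariables false


/-- A merge plan on a terminal set `R`: a family of partitions of `R`
(given as setoids, one for each time `t : ℝ`) such that two distinct
terminals `x, y` lie in different parts of the partition at time `t`
if and only if `0 ≤ t ≤ mergeTime x y`. -/
structure MergePlan (R : Type*) where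
  rel : ℝ → Setoid R
  mergeTime : R → R → ℝ
  mergeTime_self : ∀ x : R, mergeTime x x = 0
  mergeTime_nonneg : ∀ x y : R, x ≠ y → 0 ≤ mergeTime x y
  rel_iff : ∀ (t : ℝ) (x y : R), x ≠ y →
    (¬ (rel t).r x y ↔ 0 ≤ t ∧ t ≤ mergeTime x y)

/-- The local value of a merge plan for a terminal set `X`:
`∫_0^∞ (|{parts meeting X}| - 1) dt`. -/
noncomputable def MergePlan.localValue {R : Type*} (M : MergePlan R) (X : Set R) : ℝ :=
  ∫ t in Set.Ioi (0 : ℝ),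
    ((Set.ncard (Quotient.mk (M.rel t) '' X) : ℝ) - 1)

/-- The value of a merge plan: `∫_0^∞ (|S^t| - 1) dt`. -/
noncomputable def MergePlan.value {R : Type*} (M : MergePlan R) : ℝ :=
  M.localValue Set.univ
/-- `minimax u x y` is the minimum over `x`-`y` paths `P` in the complete graph on `R`
of the maximum of `u` over the edges of `P`. Paths are encoded as lists of vertices with
distinct consecutive entries. -/
noncomputable def minimax {R : Type*} (u : Sym2 R → ℝ) (x y : R) : ℝ :=
  sInf {m : ℝ | ∃ l : List R,
    List.Chain' (fun a b => a ≠ b) (x :: l) ∧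
    (x :: l).getLast (List.cons_ne_nil x l) = y ∧
    m = (((x :: l).zip l).map fun p => u s(p.1, p.2)).foldr max 0}
/-- The minimum cost of a spanning tree of the complete graph on `R`
with respect to the edge costs `u`. -/
noncomputable def mstCost {R : Type*} (u : Sym2 R → ℝ) : ℝ :=
  sInf {w : ℝ | ∃ T : Finset (Sym2 R), (∀ e ∈ T, ¬ e.IsDiag) ∧
    (SimpleGraph.fromEdgeSet (↑T : Set (Sym2 R))).Connected ∧
    T.card + 1 = Nat.card R ∧ w = ∑ e ∈ T, u e}
/-- Shortest-path distance in the weighted graph `(G, c)`, as a function on unordered pairs. -/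
noncomputable def wdist {V : Type*} (G : SimpleGraph V) (c : Sym2 V → ℝ) : Sym2 V → ℝ :=
  Sym2.lift ⟨fun x y => sInf {d : ℝ |
      (∃ p : G.Walk x y, d = (p.edges.map c).sum) ∨
      (∃ p : G.Walk y x, d = (p.edges.map c).sum)},
    fun x y => congrArg sInf (Set.ext fun _ => or_comm)⟩

/-- The metric closure of `(G, c)` restricted to a terminal set `R`. -/
noncomputable def restrictDist {V : Type*} (G : SimpleGraph V) (c : Sym2 V → ℝ)
    (R : Finset V) : Sym2 {v : V // v ∈ R} → ℝ :=
  Sym2.lift ⟨fun a b => wdist G c s((a : V), (b : V)), fun a b => by show wdist G c s((a : V), (b : V)) = wdist G c s((b : V), (a : V)); rw [Sym2.eq_swap]⟩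
/-- The setoid on `R` identifying all elements of `X` (and nothing else). -/
def contractSetoid {R : Type*} (X : Set R) : Setoid R where
  r a b := a = b ∨ (a ∈ X ∧ b ∈ X)
  iseqv := ⟨fun _ => Or.inl rfl,
    fun h => h.elim (fun e => Or.inl e.symm) (fun h' => Or.inr ⟨h'.2, h'.1⟩),
    fun h1 h2 => by
      rcases h1 with rfl | ⟨ha, hb⟩
      · exact h2
      · rcases h2 with rfl | ⟨_, hc⟩
        · exact Or.inr ⟨ha, hb⟩
        · exact Or.inr ⟨ha, hc⟩⟩

/-- Edge costs on the quotient of `R` by a setoid `sd`: the minimum of `d`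
over all pairs of representatives. -/
noncomputable def quotCost {R : Type*} (d : Sym2 R → ℝ) (sd : Setoid R) :
    Sym2 (Quotient sd) → ℝ :=
  fun e => sInf {v : ℝ | ∃ a b : R,
    s(Quotient.mk sd a, Quotient.mk sd b) = e ∧ v = d s(a, b)}

/-- `drop(X) = TMST - TMST_{/X}` for the terminal metric `d`. -/
noncomputable def dropCost {R : Type*} (d : Sym2 R → ℝ) (X : Set R) : ℝ :=
  mstCost d - mstCost (quotCost d (contractSetoid X))

set_option linter.unusedSectionVars false

section A
variable {S : Type*}

lemma foldr_max_nonneg (l : List ℝ) : 0 ≤ l.foldr max 0 := by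
  induction l with
  | nil => simp
  | cons a l ih => simpa using Or.inr ih

lemma le_foldr_max {a : ℝ} {l : List ℝ} (h : a ∈ l) : a ≤ l.foldr max 0 := by
  induction l with
  | nil => simp at h
  | cons b l ih =>
    rcases List.mem_cons.1 h with rfl | h
    · simp [List.foldr_cons]
    · exact le_max_of_le_right (ih h)

lemma foldr_max_of_nonneg {c : ℝ} (hc : 0 ≤ c) (l : List ℝ) :
    l.foldr max c = max (l.foldr max 0) c := by
  induction l with
  | nil => simp [hc, max_eq_right hc]
  | cons a l ih => simp [List.foldr_cons, ih, max_assoc]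

lemma foldr_max_append (l1 l2 : List ℝ) :
    (l1 ++ l2).foldr max 0 = max (l1.foldr max 0) (l2.foldr max 0) := by
  rw [List.foldr_append, foldr_max_of_nonneg (foldr_max_nonneg l2)]

lemma foldr_max_mem (l : List ℝ) : l.foldr max 0 = 0 ∨ l.foldr max 0 ∈ l := by
  induction l with
  | nil => simp
  | cons a l ih =>
    rcases max_cases a (l.foldr max 0) with ⟨h, _⟩ | ⟨h, _⟩
    · right; rw [List.foldr_cons, h]; exact List.mem_cons_self
    · rcases ih with h0 | hm
      · left; rw [List.foldr_cons, h, h0]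
      · right; rw [List.foldr_cons, h]; exact List.mem_cons_of_mem _ hm

lemma zip_append (l2 : List S) : ∀ (l1 : List S) (x y : S),
    (x :: l1).getLast (List.cons_ne_nil x l1) = y →
    ((x :: (l1 ++ l2)).zip (l1 ++ l2)) = ((x :: l1).zip l1) ++ ((y :: l2).zip l2) := by
  intro l1
  induction l1 with
  | nil => intro x y h; simp at h; subst h; simp
  | cons a l1 ih =>
    intro x y h
    have h' : (a :: l1).getLast (List.cons_ne_nil a l1) = y := by
      rw [← h]; exact (List.getLast_cons (List.cons_ne_nil a l1)).symm
    have := ih a y h'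
    simp only [List.cons_append, List.zip_cons_cons] at this ⊢
    rw [this]

end A

section B
variable {S : Type*} [Finite S] {u : Sym2 S → ℝ}

/-- The set of path values defining `minimax`. -/
def pathSet (u : Sym2 S → ℝ) (x y : S) : Set ℝ :=
  {m : ℝ | ∃ l : List S,
    List.Chain' (fun a b => a ≠ b) (x :: l) ∧
    (x :: l).getLast (List.cons_ne_nil x l) = y ∧
    m = (((x :: l).zip l).map fun p => u s(p.1, p.2)).foldr max 0}

lemma minimax_eq_pathSet (x y : S) : minimax u x y = sInf (pathSet u x y) := rfl

/-- path value of the vertex list `x :: l`. -/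
def pval (u : Sym2 S → ℝ) (x : S) (l : List S) : ℝ :=
  (((x :: l).zip l).map fun p => u s(p.1, p.2)).foldr max 0

lemma pval_nonneg (x : S) (l : List S) : 0 ≤ pval u x l := foldr_max_nonneg _

lemma pathSet_nonempty (x y : S) : (pathSet u x y).Nonempty := by
  by_cases h : x = y
  · subst h; exact ⟨0, [], by simp [List.Chain']⟩
  · exact ⟨max (u s(x,y)) 0, [y], by simp [List.Chain', h], by simp, by simp⟩

lemma pathSet_finite (x y : S) : (pathSet u x y).Finite := by
  have : pathSet u x y ⊆ insert 0 (Set.range u) := by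
    rintro m ⟨l, _, _, rfl⟩
    rcases foldr_max_mem ((((x :: l).zip l).map fun p => u s(p.1, p.2))) with h | h
    · rw [h]; exact Set.mem_insert _ _
    · rcases List.mem_map.1 h with ⟨p, _, hp⟩
      exact Set.mem_insert_of_mem _ ⟨s(p.1, p.2), hp⟩
  exact Set.Finite.subset ((Set.finite_range u).insert 0) this

lemma pathSet_bddBelow (x y : S) : BddBelow (pathSet u x y) :=
  (pathSet_finite x y).bddBelow

lemma minimax_nonneg (x y : S) : 0 ≤ minimax u x y :=
  Real.sInf_nonneg (by rintro m ⟨l, _, _, rfl⟩; exact foldr_max_nonneg _)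

lemma minimax_self (x : S) : minimax u x x = 0 :=
  le_antisymm (csInf_le (pathSet_bddBelow x x) ⟨[], by simp [List.Chain']⟩) (minimax_nonneg x x)

lemma minimax_le_edge (hu : ∀ e, 0 ≤ u e) {x y : S} (h : x ≠ y) :
    minimax u x y ≤ u s(x, y) := by
  have : u s(x,y) ∈ pathSet u x y := ⟨[y], by simp [List.Chain', h], by simp, by simp [hu s(x,y)]⟩
  exact csInf_le (pathSet_bddBelow x y) this

lemma minimax_exists (x y : S) : ∃ l : List S,
    List.Chain' (fun a b => a ≠ b) (x :: l) ∧
    (x :: l).getLast (List.cons_ne_nil x l) = y ∧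
    minimax u x y = pval u x l :=
  (pathSet_nonempty x y).csInf_mem (pathSet_finite x y)

lemma edge_le_pval {x : S} {l : List S} {p : S × S} (hp : p ∈ (x :: l).zip l) :
    u s(p.1, p.2) ≤ pval u x l :=
  le_foldr_max (List.mem_map.2 ⟨p, hp, rfl⟩)

end B

section B2
variable {S : Type*} [Finite S] {u : Sym2 S → ℝ}

lemma getLast_eq_iff {l : List S} (h : l ≠ []) {y : S} :
    l.getLast h = y ↔ l.getLast? = some y := by
  rw [List.getLast?_eq_getLast h, Option.some_inj]

lemma pval_cons (x a : S) (l : List S) :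
    pval u x (a :: l) = max (u s(x, a)) (pval u a l) := by
  simp [pval, List.foldr_cons]

lemma pval_append (x y : S) (l1 l2 : List S)
    (h : (x :: l1).getLast (List.cons_ne_nil x l1) = y) :
    pval u x (l1 ++ l2) = max (pval u x l1) (pval u y l2) := by
  unfold pval
  rw [zip_append l2 l1 x y h, List.map_append, foldr_max_append]

lemma pval_reverse (hu : ∀ e, 0 ≤ u e) :
    ∀ (l : List S) (x y : S), (x :: l).getLast (List.cons_ne_nil x l) = y →
    pval u y ((x :: l).reverse.tail) = pval u x l := by
  intro l
  induction l with
  | nil => intro x y h; simp at h; subst h; simp [pval]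
  | cons a l ih =>
    intro x y h
    have h' : (a :: l).getLast (List.cons_ne_nil a l) = y := by
      rw [← h]; exact (List.getLast_cons (List.cons_ne_nil a l)).symm
    obtain ⟨m0, m, hm⟩ := List.exists_cons_of_ne_nil
      (show (a :: l).reverse ≠ [] by simp)
    have hrev : (x :: a :: l).reverse.tail = (a :: l).reverse.tail ++ [x] := by
      rw [show (x :: a :: l).reverse = (a :: l).reverse ++ [x] by simp, hm]
      simp
    have hh : (a :: l).reverse.head (by simp) = y := by
      rw [List.head_reverse]; exact h'
    have hy : y :: (a :: l).reverse.tail = (a :: l).reverse := by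
      rw [← hh]; exact List.cons_head_tail _
    have hlast : (y :: (a :: l).reverse.tail).getLast
        (List.cons_ne_nil _ _) = a := by
      rw [getLast_eq_iff, hy, List.getLast?_reverse]; rfl
    rw [hrev, pval_append y a _ [x] hlast, ih a y h']
    have e1 : pval u a [x] = u s(a, x) := by
      show max (u s(a,x)) 0 = u s(a,x)
      exact max_eq_left (hu _)
    rw [e1, pval_cons, max_comm, Sym2.eq_swap]

lemma minimax_comm (hu : ∀ e, 0 ≤ u e) (x y : S) : minimax u x y = minimax u y x := by
  have key : ∀ a b : S, minimax u a b ≤ minimax u b a := by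
    intro a b
    obtain ⟨l, hc, hl, hv⟩ := minimax_exists (u := u) b a
    have hh : (b :: l).reverse.head (by simp) = a := by
      rw [List.head_reverse]; exact hl
    have hrev : (b :: l).reverse = a :: ((b :: l).reverse.tail) := by
      rw [← hh]; exact (List.cons_head_tail _).symm
    have hchain : List.Chain' (fun a b => a ≠ b) (a :: ((b :: l).reverse.tail)) := by
      rw [← hrev]
      exact List.isChain_reverse.2 (hc.imp fun _ _ h => h.symm)
    have hlast : (a :: ((b :: l).reverse.tail)).getLast
        (List.cons_ne_nil _ _) = b := by
      rw [getLast_eq_iff, show a :: ((b :: l).reverse.tail) = (b :: l).reverse from hrev.symm,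
        List.getLast?_reverse]
      rfl
    have hmem : pval u a ((b :: l).reverse.tail) ∈ pathSet u a b := ⟨_, hchain, hlast, rfl⟩
    calc minimax u a b ≤ pval u a ((b :: l).reverse.tail) :=
          csInf_le (pathSet_bddBelow a b) hmem
      _ = minimax u b a := by rw [pval_reverse hu l b a hl, hv]
  exact le_antisymm (key x y) (key y x)

lemma minimax_triangle (hu : ∀ e, 0 ≤ u e) (x y z : S) :
    minimax u x z ≤ max (minimax u x y) (minimax u y z) := by
  obtain ⟨l1, hc1, hl1, hv1⟩ := minimax_exists (u := u) x y
  obtain ⟨l2, hc2, hl2, hv2⟩ := minimax_exists (u := u) y z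
  rcases l2 with _ | ⟨c, l2'⟩
  · simp at hl2; subst hl2; exact le_max_left _ _
  · set L2 : List S := c :: l2' with hL2
    have hsplit : x :: (l1 ++ L2) = (x :: l1) ++ L2 := by simp
    have hchain : List.Chain' (fun a b => a ≠ b) (x :: (l1 ++ L2)) := by
      rw [hsplit, List.Chain', List.isChain_append]
      refine ⟨hc1, hc2.tail, ?_⟩
      intro p hp q hq
      rw [List.getLast?_eq_getLast (List.cons_ne_nil x l1), Option.mem_def,
        Option.some_inj] at hp
      rw [hl1] at hp; subst hp
      simp only [hL2, List.head?_cons, Option.mem_def, Option.some_inj] at hq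
      subst hq
      exact (List.isChain_cons_cons.1 hc2).1
    have hlast : (x :: (l1 ++ L2)).getLast (List.cons_ne_nil _ _) = z := by
      rw [getLast_eq_iff, hsplit, List.getLast?_append]
      have : L2.getLast? = some z := by
        rw [← List.getLast?_cons_cons (a := y) (b := c) (l := l2')]
        exact (getLast_eq_iff _).1 hl2
      rw [this]; rfl
    have hval : pval u x (l1 ++ L2) = max (pval u x l1) (pval u y L2) :=
      pval_append x y l1 L2 hl1
    have hmem : pval u x (l1 ++ L2) ∈ pathSet u x z := ⟨_, hchain, hlast, rfl⟩
    calc minimax u x z ≤ pval u x (l1 ++ L2) := csInf_le (pathSet_bddBelow x z) hmem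
      _ = max (pval u x l1) (pval u y L2) := hval
      _ = max (minimax u x y) (minimax u y z) := by rw [hv1, hv2]

lemma minimax_lower {x y : S} (h : x ≠ y) {c : ℝ}
    (hc : ∀ p q : S, p ≠ q → c ≤ u s(p, q)) : c ≤ minimax u x y := by
  apply le_csInf (pathSet_nonempty x y)
  rintro m ⟨l, hchain, hlast, rfl⟩
  rcases l with _ | ⟨d, l'⟩
  · simp at hlast; exact absurd hlast h
  · have hxd : x ≠ d := (List.isChain_cons_cons.1 hchain).1
    have : u s(x, d) ≤ pval u x (d :: l') :=
      edge_le_pval (u := u) (x := x) (l := d :: l') (p := (x, d))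
        (by rw [List.zip_cons_cons]; exact List.mem_cons_self)
    exact (hc x d hxd).trans this

/-- all edge values on a minimax-optimal path are at most the minimax value -/
lemma minimax_path_edges (x y : S) : ∃ l : List S,
    List.Chain' (fun a b => a ≠ b) (x :: l) ∧
    (x :: l).getLast (List.cons_ne_nil x l) = y ∧
    ∀ p ∈ (x :: l).zip l, u s(p.1, p.2) ≤ minimax u x y := by
  obtain ⟨l, hc, hl, hv⟩ := minimax_exists (u := u) x y
  exact ⟨l, hc, hl, fun p hp => hv ▸ edge_le_pval hp⟩

end B2

section C
variable {S : Type*} [Finite S]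

/-- The threshold setoid: `a ~ b` iff `a = b` or `minimax u a b < t`. -/
def thSetoid (u : Sym2 S → ℝ) (hu : ∀ e, 0 ≤ u e) (t : ℝ) : Setoid S where
  r a b := a = b ∨ minimax u a b < t
  iseqv := by
    refine ⟨fun _ => Or.inl rfl, ?_, ?_⟩
    · rintro a b (rfl | h)
      · exact Or.inl rfl
      · exact Or.inr (minimax_comm hu b a ▸ h)
    · rintro a b c (rfl | h1) h2
      · exact h2
      · rcases h2 with rfl | h2
        · exact Or.inr h1
        · exact Or.inr (lt_of_le_of_lt (minimax_triangle hu a b c) (max_lt h1 h2))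

lemma thSetoid_r {u : Sym2 S → ℝ} {hu : ∀ e, 0 ≤ u e} {t : ℝ} {a b : S} :
    (thSetoid u hu t).r a b ↔ a = b ∨ minimax u a b < t := Iff.rfl

/-- The join of the threshold setoid with the contraction of `Y`. -/
def joinSetoid (u : Sym2 S → ℝ) (hu : ∀ e, 0 ≤ u e) (t : ℝ) (Y : Set S) : Setoid S where
  r a b := (thSetoid u hu t).r a b ∨
    ((∃ p ∈ Y, (thSetoid u hu t).r a p) ∧ (∃ q ∈ Y, (thSetoid u hu t).r b q))
  iseqv := by
    have hr := (thSetoid u hu t).iseqv.refl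
    have hs : ∀ {a b : S}, (thSetoid u hu t).r a b → (thSetoid u hu t).r b a :=
      fun h => (thSetoid u hu t).iseqv.symm h
    have ht : ∀ {a b c : S}, (thSetoid u hu t).r a b → (thSetoid u hu t).r b c →
        (thSetoid u hu t).r a c := fun h h' => (thSetoid u hu t).iseqv.trans h h'
    constructor
    · intro a; exact Or.inl (hr a)
    · rintro a b (h | ⟨h1, h2⟩)
      · exact Or.inl (hs h)
      · exact Or.inr ⟨h2, h1⟩
    · rintro a b c (h | ⟨h1, h2⟩) h'
      · rcases h' with h' | ⟨h1', h2'⟩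
        · exact Or.inl (ht h h')
        · refine Or.inr ⟨?_, h2'⟩
          obtain ⟨p, hp, hap⟩ := h1'
          exact ⟨p, hp, ht h hap⟩
      · rcases h' with h' | ⟨h1', h2'⟩
        · refine Or.inr ⟨h1, ?_⟩
          obtain ⟨q, hq, hbq⟩ := h2
          exact ⟨q, hq, ht (hs h') hbq⟩
        · exact Or.inr ⟨h1, h2'⟩

end C

section D
variable {S : Type*} [Finite S] (w : Sym2 S → ℝ) (σ : Setoid S)

lemma quotCost_set_eq (e : Sym2 (Quotient σ)) :
    {v : ℝ | ∃ a b : S, s(Quotient.mk σ a, Quotient.mk σ b) = e ∧ v = w s(a, b)}.Nonempty ∧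
    {v : ℝ | ∃ a b : S, s(Quotient.mk σ a, Quotient.mk σ b) = e ∧ v = w s(a, b)}.Finite := by
  constructor
  · induction e using Sym2.ind with
    | _ p q =>
      obtain ⟨a, ha⟩ := Quotient.exists_rep p
      obtain ⟨b, hb⟩ := Quotient.exists_rep q
      exact ⟨w s(a, b), a, b, by rw [ha, hb], rfl⟩
  · apply Set.Finite.subset (Set.finite_range w)
    rintro v ⟨a, b, _, rfl⟩
    exact ⟨s(a, b), rfl⟩

lemma quotCost_exists (e : Sym2 (Quotient σ)) :
    ∃ a b : S, s(Quotient.mk σ a, Quotient.mk σ b) = e ∧ quotCost w σ e = w s(a, b) := by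
  obtain ⟨hne, hfin⟩ := quotCost_set_eq w σ e
  have := hne.csInf_mem hfin
  obtain ⟨a, b, h1, h2⟩ := this
  exact ⟨a, b, h1, h2⟩

lemma quotCost_le (a b : S) : quotCost w σ s(Quotient.mk σ a, Quotient.mk σ b) ≤ w s(a, b) :=
  csInf_le (quotCost_set_eq w σ _).2.bddBelow ⟨a, b, rfl, rfl⟩

lemma quotCost_nonneg (hw : ∀ e, 0 ≤ w e) (e : Sym2 (Quotient σ)) : 0 ≤ quotCost w σ e :=
  Real.sInf_nonneg (by rintro v ⟨a, b, _, rfl⟩; exact hw _)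

lemma quotCost_half (e : Sym2 (Quotient σ)) (hw : ∀ e, 0 ≤ w e) :
    quotCost (fun e => w e / 2) σ e = quotCost w σ e / 2 := by
  apply le_antisymm
  · obtain ⟨a, b, h1, h2⟩ := quotCost_exists w σ e
    calc quotCost (fun e => w e / 2) σ e ≤ w s(a, b) / 2 := by
          rw [← h1]; exact quotCost_le (fun e => w e / 2) σ a b
      _ = quotCost w σ e / 2 := by rw [h2]
  · obtain ⟨a, b, h1, h2⟩ := quotCost_exists (fun e => w e / 2) σ e
    calc quotCost w σ e / 2 ≤ w s(a, b) / 2 := by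
          have := quotCost_le w σ a b
          rw [h1] at this
          linarith
      _ = quotCost (fun e => w e / 2) σ e := h2.symm

end D

section E
variable {S : Type*} [Finite S] (u : Sym2 S → ℝ) (hu : ∀ e, 0 ≤ u e) (t : ℝ) (Y : Set S)

/-- relation on the quotient is reached from a path below -/
lemma reach_up : ∀ (l : List S) (x : S),
    (∀ p ∈ (x :: l).zip l, u s(p.1, p.2) < t) →
    (thSetoid (quotCost u (contractSetoid Y)) (quotCost_nonneg u _ hu) t).r
      (Quotient.mk (contractSetoid Y) x)
      (Quotient.mk (contractSetoid Y) ((x :: l).getLast (List.cons_ne_nil x l))) := by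
  set σ0 := contractSetoid Y
  set uq := quotCost u σ0
  set th' := thSetoid uq (quotCost_nonneg u _ hu) t
  intro l
  induction l with
  | nil => intro x _; exact th'.iseqv.refl _
  | cons d l' ih =>
    intro x hlt
    have h1 : u s(x, d) < t := hlt (x, d) (by rw [List.zip_cons_cons]; exact List.mem_cons_self)
    have step : th'.r (Quotient.mk σ0 x) (Quotient.mk σ0 d) := by
      by_cases hxd : Quotient.mk σ0 x = Quotient.mk σ0 d
      · exact Or.inl hxd
      · refine Or.inr (lt_of_le_of_lt ?_ h1)
        calc minimax uq (Quotient.mk σ0 x) (Quotient.mk σ0 d)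
            ≤ uq s(Quotient.mk σ0 x, Quotient.mk σ0 d) :=
              minimax_le_edge (quotCost_nonneg u _ hu) hxd
          _ ≤ u s(x, d) := quotCost_le u σ0 x d
    have ih' := ih d (fun p hp => hlt p (by rw [List.zip_cons_cons]; exact List.mem_cons_of_mem _ hp))
    rw [show (x :: d :: l').getLast (List.cons_ne_nil _ _) =
      (d :: l').getLast (List.cons_ne_nil d l') from List.getLast_cons _]
    exact th'.iseqv.trans step ih'

lemma th_to_quot {x y : S} (h : (thSetoid u hu t).r x y) :
    (thSetoid (quotCost u (contractSetoid Y)) (quotCost_nonneg u _ hu) t).r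
      (Quotient.mk (contractSetoid Y) x) (Quotient.mk (contractSetoid Y) y) := by
  rcases h with rfl | h
  · exact (thSetoid _ _ t).iseqv.refl _
  · obtain ⟨l, _, hlast, hedges⟩ := minimax_path_edges (u := u) x y
    have := reach_up u hu t Y l x (fun p hp => lt_of_le_of_lt (hedges p hp) h)
    rwa [hlast] at this

lemma mkeq_to_join {x y : S} (h : Quotient.mk (contractSetoid Y) x = Quotient.mk (contractSetoid Y) y) :
    (joinSetoid u hu t Y).r x y := by
  have := Quotient.exact h
  rcases this with rfl | ⟨hx, hy⟩
  · exact (joinSetoid u hu t Y).iseqv.refl _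
  · exact Or.inr ⟨⟨x, hx, Or.inl rfl⟩, ⟨y, hy, Or.inl rfl⟩⟩

lemma reach_down : ∀ (lq : List (Quotient (contractSetoid Y))) (q0 : Quotient (contractSetoid Y)),
    (∀ p ∈ (q0 :: lq).zip lq, quotCost u (contractSetoid Y) s(p.1, p.2) < t) →
    ∀ x y : S, Quotient.mk (contractSetoid Y) x = q0 →
      Quotient.mk (contractSetoid Y) y = (q0 :: lq).getLast (List.cons_ne_nil q0 lq) →
      (joinSetoid u hu t Y).r x y := by
  set σ0 := contractSetoid Y
  set J := joinSetoid u hu t Y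
  intro lq
  induction lq with
  | nil =>
    intro q0 _ x y hx hy
    simp only [List.getLast_singleton] at hy
    exact mkeq_to_join u hu t Y (hx.trans hy.symm)
  | cons q1 lq' ih =>
    intro q0 hlt x y hx hy
    have h1 : quotCost u σ0 s(q0, q1) < t :=
      hlt (q0, q1) (by rw [List.zip_cons_cons]; exact List.mem_cons_self)
    obtain ⟨c, d, hcd, hval⟩ := quotCost_exists u σ0 s(q0, q1)
    have hylast : Quotient.mk σ0 y = (q1 :: lq').getLast (List.cons_ne_nil q1 lq') := by
      rw [hy]; exact List.getLast_cons _
    have hedges' : ∀ p ∈ (q1 :: lq').zip lq', quotCost u σ0 s(p.1, p.2) < t :=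
      fun p hp => hlt p (by rw [List.zip_cons_cons]; exact List.mem_cons_of_mem _ hp)
    rcases Sym2.eq_iff.1 hcd with ⟨h2, h3⟩ | ⟨h2, h3⟩
    · -- ⟦c⟧ = q0, ⟦d⟧ = q1
      have j1 : J.r x c := mkeq_to_join u hu t Y (hx.trans h2.symm)
      have j2 : J.r c d := by
        by_cases hcd' : c = d
        · exact hcd' ▸ J.iseqv.refl _
        · exact Or.inl (Or.inr (lt_of_le_of_lt (minimax_le_edge hu hcd') (hval ▸ h1)))
      have j3 : J.r d y := ih q1 hedges' d y h3 hylast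
      exact J.iseqv.trans j1 (J.iseqv.trans j2 j3)
    · -- ⟦c⟧ = q1, ⟦d⟧ = q0
      have j1 : J.r x d := mkeq_to_join u hu t Y (hx.trans h3.symm)
      have j2 : J.r d c := by
        by_cases hcd' : d = c
        · exact hcd' ▸ J.iseqv.refl _
        · refine Or.inl (Or.inr (lt_of_le_of_lt (minimax_le_edge hu hcd') ?_))
          rw [Sym2.eq_swap]
          exact hval ▸ h1
      have j3 : J.r c y := ih q1 hedges' c y h2 hylast
      exact J.iseqv.trans j1 (J.iseqv.trans j2 j3)

end E

section E2
variable {S : Type*} [Finite S] (u : Sym2 S → ℝ) (hu : ∀ e, 0 ≤ u e) (t : ℝ) (Y : Set S)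

lemma quot_to_join {x y : S}
    (h : (thSetoid (quotCost u (contractSetoid Y)) (quotCost_nonneg u _ hu) t).r
      (Quotient.mk (contractSetoid Y) x) (Quotient.mk (contractSetoid Y) y)) :
    (joinSetoid u hu t Y).r x y := by
  set σ0 := contractSetoid Y
  rcases h with heq | hlt
  · exact mkeq_to_join u hu t Y heq
  · obtain ⟨lq, _, hlast, hedges⟩ :=
      minimax_path_edges (u := quotCost u σ0) (Quotient.mk σ0 x) (Quotient.mk σ0 y)
    exact reach_down u hu t Y lq (Quotient.mk σ0 x)
      (fun p hp => lt_of_le_of_lt (hedges p hp) hlt) x y rfl hlast.symm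

lemma join_to_quot {x y : S} (h : (joinSetoid u hu t Y).r x y) :
    (thSetoid (quotCost u (contractSetoid Y)) (quotCost_nonneg u _ hu) t).r
      (Quotient.mk (contractSetoid Y) x) (Quotient.mk (contractSetoid Y) y) := by
  set σ0 := contractSetoid Y
  set th' := thSetoid (quotCost u σ0) (quotCost_nonneg u _ hu) t
  rcases h with h | ⟨⟨p, hp, hxp⟩, ⟨q, hq, hyq⟩⟩
  · exact th_to_quot u hu t Y h
  · have h1 : th'.r (Quotient.mk σ0 x) (Quotient.mk σ0 p) := th_to_quot u hu t Y hxp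
    have h2 : Quotient.mk σ0 p = Quotient.mk σ0 q := Quotient.sound (Or.inr ⟨hp, hq⟩)
    have h3 : th'.r (Quotient.mk σ0 y) (Quotient.mk σ0 q) := th_to_quot u hu t Y hyq
    exact th'.iseqv.trans h1 (h2 ▸ th'.iseqv.symm h3)

lemma card_join_eq :
    Nat.card (Quotient (joinSetoid u hu t Y)) =
    Nat.card (Quotient (thSetoid (quotCost u (contractSetoid Y)) (quotCost_nonneg u _ hu) t)) := by
  set σ0 := contractSetoid Y
  set th' := thSetoid (quotCost u σ0) (quotCost_nonneg u _ hu) t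
  set J := joinSetoid u hu t Y
  let f : Quotient J → Quotient th' :=
    Quotient.lift (fun x => Quotient.mk th' (Quotient.mk σ0 x))
      (fun a b h => Quotient.sound (join_to_quot u hu t Y h))
  apply Nat.card_eq_of_bijective f
  constructor
  · intro a b hab
    induction a using Quotient.ind with
    | _ a =>
    induction b using Quotient.ind with
    | _ b =>
    simp only [f, Quotient.lift_mk] at hab
    exact Quotient.sound (quot_to_join u hu t Y (Quotient.exact hab))
  · intro q
    induction q using Quotient.ind with
    | _ q =>
    obtain ⟨x, hx⟩ := Quotient.exists_rep q
    exact ⟨Quotient.mk J x, by simp only [f, Quotient.lift_mk, hx]⟩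

end E2

section F
variable {S : Type*} [Finite S] (u : Sym2 S → ℝ) (hu : ∀ e, 0 ≤ u e) (t : ℝ)

lemma count_join {Y : Set S} (hY : Y.Nonempty) :
    Nat.card (Quotient (thSetoid u hu t)) + 1 =
    Nat.card (Quotient (joinSetoid u hu t Y)) +
      (Quotient.mk (thSetoid u hu t) '' Y).ncard := by
  set th := thSetoid u hu t
  set J := joinSetoid u hu t Y
  let π : Quotient th → Quotient J :=
    Quotient.lift (fun x => Quotient.mk J x) (fun a b h => Quotient.sound (Or.inl h))
  set W : Set (Quotient th) := Quotient.mk th '' Y with hW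
  -- claims
  have hπmk : ∀ x : S, π (Quotient.mk th x) = Quotient.mk J x := fun x => rfl
  have claim1 : ∀ c1 ∈ W, ∀ c2 ∈ W, π c1 = π c2 := by
    rintro c1 ⟨y1, hy1, rfl⟩ c2 ⟨y2, hy2, rfl⟩
    exact Quotient.sound (Or.inr ⟨⟨y1, hy1, th.iseqv.refl _⟩, ⟨y2, hy2, th.iseqv.refl _⟩⟩)
  have claim2 : Set.InjOn π Wᶜ := by
    intro c1 hc1 c2 _ heq
    induction c1 using Quotient.ind with
    | _ x =>
    induction c2 using Quotient.ind with
    | _ y =>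
    rcases Quotient.exact heq with h | ⟨⟨p, hp, hxp⟩, _⟩
    · exact Quotient.sound h
    · exact absurd ⟨p, hp, (Quotient.sound hxp).symm⟩ hc1
  have claim3 : ∀ c ∈ Wᶜ, ∀ d ∈ W, π c ≠ π d := by
    rintro c hc d ⟨y, hy, rfl⟩ heq
    induction c using Quotient.ind with
    | _ x =>
    rcases Quotient.exact heq with h | ⟨⟨p, hp, hxp⟩, _⟩
    · exact hc ⟨y, hy, (Quotient.sound h).symm⟩
    · exact hc ⟨p, hp, (Quotient.sound hxp).symm⟩
  -- surjectivity of π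
  have hsurj : Function.Surjective π := by
    intro q
    induction q using Quotient.ind with
    | _ x =>
    exact ⟨Quotient.mk th x, rfl⟩
  have hWne : W.Nonempty := hY.image _
  obtain ⟨w0, hw0⟩ := hWne
  have himW : π '' W = {π w0} := by
    apply Set.eq_singleton_iff_nonempty_unique_mem.2
    refine ⟨⟨π w0, ⟨w0, hw0, rfl⟩⟩, ?_⟩
    rintro _ ⟨c, hc, rfl⟩
    exact claim1 c hc w0 hw0
  have hdisj : Disjoint (π '' W) (π '' Wᶜ) := by
    rw [Set.disjoint_left]
    rintro _ ⟨c, hc, rfl⟩ ⟨d, hd, heq⟩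
    exact claim3 d hd c hc heq
  have huniv : π '' W ∪ π '' Wᶜ = Set.univ := by
    rw [← Set.image_union, Set.union_compl_self, Set.image_univ_of_surjective hsurj]
  have n2 : Nat.card (Quotient J) = 1 + Wᶜ.ncard := by
    rw [← Set.ncard_univ, ← huniv, Set.ncard_union_eq hdisj, himW, Set.ncard_singleton,
      Set.ncard_image_of_injOn claim2]
  have n1 : W.ncard + Wᶜ.ncard = Nat.card (Quotient th) := Set.ncard_add_ncard_compl W
  omega

end F

section G
attribute [local instance] Classical.propDecidable

open SimpleGraph

lemma card_contract_pair {S : Type*} [Finite S] {a b : S} (hab : a ≠ b) :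
    Nat.card (Quotient (contractSetoid ({a, b} : Set S))) + 1 = Nat.card S := by
  set σ0 := contractSetoid ({a, b} : Set S)
  have hinj : Set.InjOn (Quotient.mk σ0) (Set.univ \ {b}) := by
    intro x hx y hy heq
    rcases Quotient.exact heq with h | ⟨hx', hy'⟩
    · exact h
    · rcases hx' with rfl | rfl
      · rcases hy' with rfl | rfl
        · rfl
        · exact absurd rfl hy.2
      · exact absurd rfl hx.2
  have himg : Quotient.mk σ0 '' (Set.univ \ {b}) = Set.univ := by
    apply Set.eq_univ_of_forall
    intro q
    obtain ⟨x, rfl⟩ := Quotient.exists_rep q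
    by_cases hx : x = b
    · subst hx
      exact ⟨a, ⟨trivial, hab⟩, Quotient.sound (Or.inr ⟨by simp, by simp⟩)⟩
    · exact ⟨x, ⟨trivial, hx⟩, rfl⟩
  have h1 : Nat.card (Quotient σ0) = (Set.univ \ ({b} : Set S)).ncard := by
    rw [← Set.ncard_univ, ← himg, Set.ncard_image_of_injOn hinj]
  rw [h1, Set.ncard_diff_singleton_add_one (Set.mem_univ b), Set.ncard_univ]

lemma reach_map {W : Type*} (σ : Setoid W) (H : Finset (Sym2 W)) {x y : W}
    (h : (fromEdgeSet (H : Set (Sym2 W))).Reachable x y) :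
    (fromEdgeSet (((H.image (Sym2.map (Quotient.mk σ))).filter
      (fun e => ¬ e.IsDiag) : Finset (Sym2 (Quotient σ))) : Set (Sym2 (Quotient σ)))).Reachable
      (Quotient.mk σ x) (Quotient.mk σ y) := by
  obtain ⟨p⟩ := h
  induction p with
  | nil => rfl
  | @cons a c d h p ih =>
    obtain ⟨hmem, hne⟩ := (fromEdgeSet_adj _).1 h
    by_cases hq : Quotient.mk σ a = Quotient.mk σ c
    · rwa [hq]
    · refine Reachable.trans (Adj.reachable ?_) ih
      rw [fromEdgeSet_adj]
      refine ⟨?_, hq⟩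
      rw [Finset.mem_coe, Finset.mem_filter]
      constructor
      · exact Finset.mem_image.2 ⟨s(a, c), hmem, Sym2.map_pair_eq _ _ _⟩
      · rw [Sym2.mk_isDiag_iff]; exact hq

lemma map_conn {W : Type*} (σ : Setoid W) (H : Finset (Sym2 W))
    (hc : (fromEdgeSet (H : Set (Sym2 W))).Connected) :
    (fromEdgeSet (((H.image (Sym2.map (Quotient.mk σ))).filter
      (fun e => ¬ e.IsDiag) : Finset (Sym2 (Quotient σ))) : Set (Sym2 (Quotient σ)))).Connected := by
  haveI : Nonempty W := hc.nonempty
  haveI : Nonempty (Quotient σ) := Nonempty.map (Quotient.mk σ) ‹Nonempty W›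
  refine ⟨fun q1 q2 => ?_⟩
  obtain ⟨x, rfl⟩ := Quotient.exists_rep q1
  obtain ⟨y, rfl⟩ := Quotient.exists_rep q2
  exact reach_map σ H (hc.preconnected x y)

lemma edge_count : ∀ (n : ℕ) {W : Type u} [Finite W] [Nonempty W], Nat.card W = n →
    ∀ H : Finset (Sym2 W), (fromEdgeSet (H : Set (Sym2 W))).Connected →
    Nat.card W ≤ H.card + 1 := by
  intro n
  induction n using Nat.strong_induction_on with
  | _ n IH =>
    intro W _ _ hn H hc
    by_cases hn1 : Nat.card W ≤ 1
    · omega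
    · push_neg at hn1
      letI := Fintype.ofFinite W
      have : Nontrivial W := by
        rw [← Fintype.one_lt_card_iff_nontrivial, ← Nat.card_eq_fintype_card]
        exact hn1
      obtain ⟨a, b, hab⟩ := exists_pair_ne W
      obtain ⟨p⟩ := hc.preconnected a b
      cases p with
      | nil => exact absurd rfl hab
      | cons h p =>
        rename_i z
        obtain ⟨hmem, hne⟩ := (fromEdgeSet_adj _).1 h
        rw [Finset.mem_coe] at hmem
        set σ0 := contractSetoid ({a, z} : Set W)
        set H2 := (H.image (Sym2.map (Quotient.mk σ0))).filter (fun e => ¬ e.IsDiag) with hH2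
        have hcard : Nat.card (Quotient σ0) + 1 = Nat.card W := card_contract_pair hne
        have hconn2 := map_conn σ0 H hc
        haveI : Nonempty (Quotient σ0) := Nonempty.map (Quotient.mk σ0) ‹Nonempty W›
        have hIH := IH (Nat.card (Quotient σ0)) (by omega) rfl H2 hconn2
        -- H2.card ≤ H.card - 1
        have hsub : H2 ⊆ (H.erase s(a, z)).image (Sym2.map (Quotient.mk σ0)) := by
          intro e2 he2
          rw [hH2, Finset.mem_filter] at he2
          obtain ⟨hmem2, hnd⟩ := he2
          obtain ⟨e, he, rfl⟩ := Finset.mem_image.1 hmem2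
          refine Finset.mem_image.2 ⟨e, Finset.mem_erase.2 ⟨?_, he⟩, rfl⟩
          rintro rfl
          apply hnd
          rw [Sym2.map_pair_eq, Sym2.mk_isDiag_iff]
          exact Quotient.sound (Or.inr ⟨Or.inl rfl, Or.inr rfl⟩)
        have hc2 : H2.card ≤ H.card - 1 := by
          calc H2.card ≤ ((H.erase s(a, z)).image (Sym2.map (Quotient.mk σ0))).card :=
                Finset.card_le_card hsub
            _ ≤ (H.erase s(a, z)).card := Finset.card_image_le
            _ = H.card - 1 := Finset.card_erase_of_mem hmem
        have hpos : 0 < H.card := Finset.card_pos.2 ⟨_, hmem⟩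
        omega

lemma cut_bound {W : Type u} [Finite W] [Nonempty W] (σ : Setoid W) (H : Finset (Sym2 W))
    (hc : (fromEdgeSet (H : Set (Sym2 W))).Connected) :
    Nat.card (Quotient σ) ≤
      (H.filter fun e => ¬(Sym2.map (Quotient.mk σ) e).IsDiag).card + 1 := by
  set H2 := (H.image (Sym2.map (Quotient.mk σ))).filter (fun e => ¬ e.IsDiag) with hH2
  haveI : Nonempty (Quotient σ) := Nonempty.map (Quotient.mk σ) ‹Nonempty W›
  have h1 := edge_count (Nat.card (Quotient σ)) rfl H2 (map_conn σ H hc)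
  have hsub : H2 ⊆ (H.filter fun e => ¬(Sym2.map (Quotient.mk σ) e).IsDiag).image
      (Sym2.map (Quotient.mk σ)) := by
    intro e2 he2
    rw [hH2, Finset.mem_filter] at he2
    obtain ⟨hmem2, hnd⟩ := he2
    obtain ⟨e, he, rfl⟩ := Finset.mem_image.1 hmem2
    exact Finset.mem_image.2 ⟨e, Finset.mem_filter.2 ⟨he, hnd⟩, rfl⟩
  have h2 : H2.card ≤ (H.filter fun e => ¬(Sym2.map (Quotient.mk σ) e).IsDiag).card :=
    (Finset.card_le_card hsub).trans Finset.card_image_le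
  omega

end G

section H
open MeasureTheory

variable {S : Type*}

/-- Sum of indicators of `(0, w e / 2]` over edges of `T`. -/
noncomputable def indSum (w : Sym2 S → ℝ) (T : Finset (Sym2 S)) (t : ℝ) : ℝ :=
  ∑ e ∈ T, (Set.Ioc (0:ℝ) (w e / 2)).indicator (fun _ => (1:ℝ)) t

lemma integrableOn_ind (a : ℝ) :
    IntegrableOn ((Set.Ioc (0:ℝ) a).indicator (fun _ => (1:ℝ))) (Set.Ioi (0:ℝ)) := by
  apply Integrable.integrableOn
  rw [integrable_indicator_iff measurableSet_Ioc]
  exact integrableOn_const measure_Ioc_lt_top.ne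

lemma integral_ind {a : ℝ} (ha : 0 ≤ a) :
    ∫ t in Set.Ioi (0:ℝ), (Set.Ioc (0:ℝ) a).indicator (fun _ => (1:ℝ)) t = a := by
  rw [setIntegral_indicator measurableSet_Ioc,
    Set.inter_eq_self_of_subset_right Set.Ioc_subset_Ioi_self, setIntegral_const,
    Real.volume_real_Ioc, smul_eq_mul, mul_one, max_eq_left (by linarith : (0:ℝ) ≤ a - 0)]
  ring

lemma integrableOn_indSum (w : Sym2 S → ℝ) (T : Finset (Sym2 S)) :
    IntegrableOn (indSum w T) (Set.Ioi (0:ℝ)) := by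
  unfold indSum
  exact MeasureTheory.integrable_finset_sum _ (fun e _ => integrableOn_ind (w e / 2))

lemma integral_indSum (w : Sym2 S → ℝ) (hw : ∀ e, 0 ≤ w e) (T : Finset (Sym2 S)) :
    ∫ t in Set.Ioi (0:ℝ), indSum w T t = ∑ e ∈ T, w e / 2 := by
  unfold indSum
  rw [MeasureTheory.integral_finset_sum _ (fun e _ => integrableOn_ind (w e / 2))]
  exact Finset.sum_congr rfl fun e _ => integral_ind (by linarith [hw e])

end H

section I
open SimpleGraph

lemma wHalf_nonneg {S : Type*} {w : Sym2 S → ℝ} (hw : ∀ e, 0 ≤ w e) :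
    ∀ e, 0 ≤ w e / 2 := fun e => by linarith [hw e]

lemma thSetoid_congr {S : Type*} [Finite S] {u1 u2 : Sym2 S → ℝ} {h1 : ∀ e, 0 ≤ u1 e}
    {h2 : ∀ e, 0 ≤ u2 e} (t : ℝ) (h : u1 = u2) : thSetoid u1 h1 t = thSetoid u2 h2 t := by
  subst h; rfl

lemma card_quot_congr {S : Type*} {σ1 σ2 : Setoid S} (h : σ1 = σ2) :
    Nat.card (Quotient σ1) = Nat.card (Quotient σ2) := by subst h; rfl

theorem main_tree : ∀ (n : ℕ) (S : Type u) [Finite S] [Nonempty S], Nat.card S = n →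
    ∀ (w : Sym2 S → ℝ) (hw : ∀ e, 0 ≤ w e),
    ∃ T : Finset (Sym2 S), (∀ e ∈ T, ¬ e.IsDiag) ∧
      (SimpleGraph.fromEdgeSet (T : Set (Sym2 S))).Connected ∧
      T.card + 1 = Nat.card S ∧
      ∀ t : ℝ, 0 < t →
        (Nat.card (Quotient (thSetoid (fun e => w e / 2) (wHalf_nonneg hw) t)) : ℝ)
          = indSum w T t + 1 := by
  intro n
  induction n using Nat.strong_induction_on with
  | _ n IH =>
  intro S _ _ hn w hw
  classical
  by_cases hn1 : Nat.card S ≤ 1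
  · -- base case : singleton
    have hpos : 0 < Nat.card S := Nat.card_pos
    have h1 : Nat.card S = 1 := by omega
    haveI : Subsingleton S := (Nat.card_eq_one_iff_unique.1 h1).1
    refine ⟨∅, by simp, ?_, by simpa using h1.symm, ?_⟩
    · refine ⟨fun x y => ?_⟩
      have : x = y := Subsingleton.elim x y
      subst this
      exact SimpleGraph.Reachable.refl _
    · intro t ht
      haveI : Nonempty (Quotient (thSetoid (fun e => w e / 2) (wHalf_nonneg hw) t)) :=
        Nonempty.map (Quotient.mk _) ‹Nonempty S›
      have : Nat.card (Quotient (thSetoid (fun e => w e / 2) (wHalf_nonneg hw) t)) = 1 :=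
        Nat.card_eq_one_iff_unique.2 ⟨inferInstance, inferInstance⟩
      rw [this]
      simp [indSum]
  · -- inductive step
    push_neg at hn1
    letI := Fintype.ofFinite S
    haveI : Nontrivial S := by
      rw [← Fintype.one_lt_card_iff_nontrivial, ← Nat.card_eq_fintype_card]
      exact hn1
    obtain ⟨a0, b0, hab0⟩ := exists_pair_ne S
    have hPne : (Finset.univ.filter (fun e : Sym2 S => ¬ e.IsDiag)).Nonempty :=
      ⟨s(a0, b0), Finset.mem_filter.2 ⟨Finset.mem_univ _, by rw [Sym2.mk_isDiag_iff]; exact hab0⟩⟩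
    obtain ⟨e0, he0P, he0min⟩ := Finset.exists_min_image _ w hPne
    revert he0P he0min
    induction e0 using Sym2.ind with
    | _ a b =>
    intro he0P he0min
    have hab : a ≠ b := by
      have := (Finset.mem_filter.1 he0P).2
      rwa [Sym2.mk_isDiag_iff] at this
    have hmin : ∀ p q : S, p ≠ q → w s(a, b) ≤ w s(p, q) := fun p q hpq =>
      he0min s(p, q) (Finset.mem_filter.2 ⟨Finset.mem_univ _, by
        rw [Sym2.mk_isDiag_iff]; exact hpq⟩)
    set σ0 := contractSetoid ({a, b} : Set S) with hσ0
    haveI : Nonempty (Quotient σ0) := Nonempty.map (Quotient.mk σ0) ‹Nonempty S›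
    have hcard' : Nat.card (Quotient σ0) + 1 = Nat.card S := card_contract_pair hab
    set w' := quotCost w σ0 with hw'def
    have hw' : ∀ e, 0 ≤ w' e := quotCost_nonneg w σ0 hw
    obtain ⟨T', hT'nd, hT'conn, hT'card, hT'id⟩ :=
      IH (Nat.card (Quotient σ0)) (by omega) (Quotient σ0) rfl w' hw'
    choose f g h1 h2 using fun e' => quotCost_exists w σ0 e'
    set pk : Sym2 (Quotient σ0) → Sym2 S := fun e' => s(f e', g e') with hpk
    have hpk_map : ∀ e', Sym2.map (Quotient.mk σ0) (pk e') = e' := by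
      intro e'; rw [hpk]; rw [Sym2.map_pair_eq]; exact h1 e'
    have hpk_inj : Set.InjOn pk (T' : Set (Sym2 (Quotient σ0))) := by
      intro x _ y _ hxy
      rw [← hpk_map x, ← hpk_map y, hxy]
    set T : Finset (Sym2 S) := insert s(a, b) (T'.image pk) with hT
    have habmem : s(a, b) ∉ T'.image pk := by
      intro hmem
      obtain ⟨e', he', heq⟩ := Finset.mem_image.1 hmem
      have hmapeq : Sym2.map (Quotient.mk σ0) s(a, b) = e' := by rw [← heq, hpk_map]
      have hdiag : (Sym2.map (Quotient.mk σ0) s(a, b)).IsDiag := by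
        rw [Sym2.map_pair_eq, Sym2.mk_isDiag_iff]
        exact Quotient.sound (Or.inr ⟨by simp, by simp⟩)
      rw [hmapeq] at hdiag
      exact hT'nd e' he' hdiag
    refine ⟨T, ?_, ?_, ?_, ?_⟩
    · -- nondiag
      intro e he
      rcases Finset.mem_insert.1 he with rfl | he
      · rw [Sym2.mk_isDiag_iff]; exact hab
      · obtain ⟨e', he', rfl⟩ := Finset.mem_image.1 he
        intro hdiag
        apply hT'nd e' he'
        have hdiag' : (s(f e', g e')).IsDiag := hdiag
        have hfg : f e' = g e' := Sym2.mk_isDiag_iff.1 hdiag'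
        rw [← hpk_map e', hpk]
        show (Sym2.map (Quotient.mk σ0) s(f e', g e')).IsDiag
        rw [Sym2.map_pair_eq, Sym2.mk_isDiag_iff]
        exact congrArg _ hfg
    · -- connected
      have hadj : (SimpleGraph.fromEdgeSet (T : Set (Sym2 S))).Adj a b := by
        rw [SimpleGraph.fromEdgeSet_adj]
        exact ⟨Finset.mem_coe.2 (Finset.mem_insert_self _ _), hab⟩
      have hsame : ∀ p q : S, Quotient.mk σ0 p = Quotient.mk σ0 q →
          (SimpleGraph.fromEdgeSet (T : Set (Sym2 S))).Reachable p q := by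
        intro p q h
        rcases Quotient.exact h with rfl | ⟨hp, hq⟩
        · exact SimpleGraph.Reachable.refl _
        · simp only [Set.mem_insert_iff, Set.mem_singleton_iff] at hp hq
          rcases hp with rfl | rfl <;> rcases hq with rfl | rfl
          · exact SimpleGraph.Reachable.refl _
          · exact hadj.reachable
          · exact hadj.symm.reachable
          · exact SimpleGraph.Reachable.refl _
      have hlift : ∀ (q1 q2 : Quotient σ0),
          (SimpleGraph.fromEdgeSet (T' : Set (Sym2 (Quotient σ0)))).Walk q1 q2 →
          ∀ p q : S, Quotient.mk σ0 p = q1 → Quotient.mk σ0 q = q2 →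
          (SimpleGraph.fromEdgeSet (T : Set (Sym2 S))).Reachable p q := by
        intro q1 q2 wk
        induction wk with
        | nil =>
          intro p q hp hq
          exact hsame p q (hp.trans hq.symm)
        | @cons x y z hadj' wk' ih =>
          intro p q hp hq
          obtain ⟨hmem', hne'⟩ := (SimpleGraph.fromEdgeSet_adj _).1 hadj'
          rw [Finset.mem_coe] at hmem'
          have hedge : s(f s(x, y), g s(x, y)) ∈ T := by
            rw [hT]
            exact Finset.mem_insert_of_mem (Finset.mem_image_of_mem pk hmem')
          have hfgne : f s(x, y) ≠ g s(x, y) := by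
            intro hfg
            apply hne'
            have h1' := h1 s(x, y)
            rw [hfg] at h1'
            have : (s(x, y)).IsDiag := by
              rw [← h1']
              exact Sym2.mk_isDiag_iff.2 rfl
            exact Sym2.mk_isDiag_iff.1 this
          have hGadj : (SimpleGraph.fromEdgeSet (T : Set (Sym2 S))).Adj (f s(x, y)) (g s(x, y)) := by
            rw [SimpleGraph.fromEdgeSet_adj]
            exact ⟨Finset.mem_coe.2 hedge, hfgne⟩
          rcases Sym2.eq_iff.1 (h1 s(x, y)) with ⟨hfx, hgy⟩ | ⟨hfy, hgx⟩
          · exact ((hsame p _ (hp.trans hfx.symm)).trans hGadj.reachable).trans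
              (ih _ q hgy hq)
          · exact ((hsame p _ (hp.trans hgx.symm)).trans hGadj.symm.reachable).trans
              (ih _ q hfy hq)
      refine ⟨fun p q => ?_⟩
      obtain ⟨wk⟩ := hT'conn.preconnected (Quotient.mk σ0 p) (Quotient.mk σ0 q)
      exact hlift _ _ wk p q rfl rfl
    · -- card
      rw [hT, Finset.card_insert_of_notMem habmem, Finset.card_image_of_injOn hpk_inj]
      omega
    · -- identity
      intro t ht
      set u : Sym2 S → ℝ := fun e => w e / 2 with hu_def
      have hu : ∀ e, 0 ≤ u e := wHalf_nonneg hw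
      show (Nat.card (Quotient (thSetoid u hu t)) : ℝ) = indSum w T t + 1
      have hid' : (Nat.card (Quotient (thSetoid (fun e => w' e / 2) (wHalf_nonneg hw') t)) : ℝ)
          = indSum w' T' t + 1 := hT'id t ht
      have τab : minimax u a b = w s(a, b) / 2 := by
        refine le_antisymm (minimax_le_edge hu hab) (minimax_lower hab ?_)
        intro p q hpq
        show w s(a, b) / 2 ≤ w s(p, q) / 2
        linarith [hmin p q hpq]
      have hqups : (fun e => w' e / 2) = quotCost u σ0 :=
        funext fun e => (quotCost_half w σ0 e hw).symm
      have hN' : Nat.card (Quotient (thSetoid (fun e => w' e / 2) (wHalf_nonneg hw') t))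
          = Nat.card (Quotient (thSetoid (quotCost u σ0) (quotCost_nonneg u σ0 hu) t)) :=
        card_quot_congr (thSetoid_congr t hqups)
      have hjoin : Nat.card (Quotient (joinSetoid u hu t ({a, b} : Set S)))
          = Nat.card (Quotient (thSetoid (quotCost u σ0) (quotCost_nonneg u σ0 hu) t)) :=
        card_join_eq u hu t ({a, b} : Set S)
      have hcount := count_join u hu t (Y := ({a, b} : Set S)) ⟨a, by simp⟩
      have hsum : indSum w T t =
          (Set.Ioc (0:ℝ) (w s(a, b) / 2)).indicator (fun _ => (1:ℝ)) t + indSum w' T' t := by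
        rw [hT]
        unfold indSum
        rw [Finset.sum_insert habmem,
          Finset.sum_image (fun x hx y hy => hpk_inj (Finset.mem_coe.2 hx) (Finset.mem_coe.2 hy))]
        congr 1
        apply Finset.sum_congr rfl
        intro e' _
        have : w (pk e') = w' e' := by rw [hpk]; exact (h2 e').symm
        rw [this]
      set nN := Nat.card (Quotient (thSetoid u hu t)) with hnN
      set nJ := Nat.card (Quotient (joinSetoid u hu t ({a, b} : Set S))) with hnJ
      set nN' := Nat.card (Quotient (thSetoid (fun e => w' e / 2) (wHalf_nonneg hw') t)) with hnN'
      by_cases hcase : t ≤ w s(a, b) / 2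
      · -- a and b still separate
        have hne_mk : Quotient.mk (thSetoid u hu t) a ≠ Quotient.mk (thSetoid u hu t) b := by
          intro h
          rcases Quotient.exact h with h' | h'
          · exact hab h'
          · rw [τab] at h'; linarith
        have himgcard : (Quotient.mk (thSetoid u hu t) '' ({a, b} : Set S)).ncard = 2 := by
          rw [Set.image_insert_eq, Set.image_singleton]
          exact Set.ncard_pair hne_mk
        have hind : (Set.Ioc (0:ℝ) (w s(a, b) / 2)).indicator (fun _ => (1:ℝ)) t = 1 :=
          Set.indicator_of_mem (Set.mem_Ioc.2 ⟨ht, hcase⟩) _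
        rw [himgcard] at hcount
        have hnn : nN = nN' + 1 := by omega
        rw [hsum, hind, hnn]
        push_cast
        linarith [hid']
      · -- a and b merged
        push_neg at hcase
        have heq_mk : Quotient.mk (thSetoid u hu t) a = Quotient.mk (thSetoid u hu t) b :=
          Quotient.sound (Or.inr (by rw [τab]; exact hcase))
        have himgcard : (Quotient.mk (thSetoid u hu t) '' ({a, b} : Set S)).ncard = 1 := by
          rw [Set.image_insert_eq, Set.image_singleton, heq_mk]
          simp
        have hind : (Set.Ioc (0:ℝ) (w s(a, b) / 2)).indicator (fun _ => (1:ℝ)) t = 0 :=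
          Set.indicator_of_notMem (fun hmem => absurd hmem.2 (not_le.2 hcase)) _
        rw [himgcard] at hcount
        have hnn : nN = nN' := by omega
        rw [hsum, hind, hnn]
        push_cast
        linarith [hid']

end I

section J
variable {S : Type u} [Finite S] [Nonempty S]

lemma pointwise_lower (w : Sym2 S → ℝ) (hw : ∀ e, 0 ≤ w e) (T' : Finset (Sym2 S))
    (hconn : (SimpleGraph.fromEdgeSet (T' : Set (Sym2 S))).Connected)
    {t : ℝ} (ht : 0 < t) :
    (Nat.card (Quotient (thSetoid (fun e => w e / 2) (wHalf_nonneg hw) t)) : ℝ)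
      ≤ indSum w T' t + 1 := by
  classical
  set u : Sym2 S → ℝ := fun e => w e / 2 with hu_def
  have hu : ∀ e, 0 ≤ u e := wHalf_nonneg hw
  set σt := thSetoid u hu t with hσt
  have hcut := cut_bound σt T' hconn
  set F := T'.filter (fun e => ¬(Sym2.map (Quotient.mk σt) e).IsDiag) with hF
  have hcard_le : (F.card : ℝ) ≤ indSum w T' t := by
    have h1 : ∀ e ∈ F, (1:ℝ) ≤ (Set.Ioc (0:ℝ) (w e / 2)).indicator (fun _ => (1:ℝ)) t := by
      intro e he
      rw [hF, Finset.mem_filter] at he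
      obtain ⟨heT, hcross⟩ := he
      have hmem : t ∈ Set.Ioc (0:ℝ) (w e / 2) := by
        induction e using Sym2.ind with
        | _ x y =>
        rw [Sym2.map_pair_eq, Sym2.mk_isDiag_iff] at hcross
        have hxy : x ≠ y := fun h => hcross (congrArg _ h)
        have hnotrel : ¬ σt.r x y := fun h => hcross (Quotient.sound h)
        have hminimax : t ≤ minimax u x y := by
          by_contra hlt
          exact hnotrel (Or.inr (not_le.1 hlt))
        exact Set.mem_Ioc.2 ⟨ht, hminimax.trans (minimax_le_edge hu hxy)⟩
      rw [Set.indicator_of_mem hmem]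
    calc (F.card : ℝ) = ∑ _e ∈ F, (1:ℝ) := by rw [Finset.sum_const, nsmul_eq_mul, mul_one]
      _ ≤ ∑ e ∈ F, (Set.Ioc (0:ℝ) (w e / 2)).indicator (fun _ => (1:ℝ)) t :=
          Finset.sum_le_sum h1
      _ ≤ indSum w T' t := by
          unfold indSum
          apply Finset.sum_le_sum_of_subset_of_nonneg (Finset.filter_subset _ _)
          intro e _ _
          exact Set.indicator_nonneg (fun _ _ => zero_le_one) t
  calc (Nat.card (Quotient σt) : ℝ) ≤ (F.card : ℝ) + 1 := by exact_mod_cast hcut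
    _ ≤ indSum w T' t + 1 := by linarith

theorem mst_eq (w : Sym2 S → ℝ) (hw : ∀ e, 0 ≤ w e) (T : Finset (Sym2 S))
    (hTnd : ∀ e ∈ T, ¬ e.IsDiag)
    (hTconn : (SimpleGraph.fromEdgeSet (T : Set (Sym2 S))).Connected)
    (hTcard : T.card + 1 = Nat.card S)
    (hTid : ∀ t : ℝ, 0 < t →
      (Nat.card (Quotient (thSetoid (fun e => w e / 2) (wHalf_nonneg hw) t)) : ℝ)
        = indSum w T t + 1) :
    mstCost w = ∑ e ∈ T, w e := by
  apply le_antisymm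
  · apply csInf_le
    · refine ⟨0, ?_⟩
      rintro v ⟨T', _, _, _, rfl⟩
      exact Finset.sum_nonneg (fun e _ => hw e)
    · exact ⟨T, hTnd, hTconn, hTcard, rfl⟩
  · refine le_csInf ⟨∑ e ∈ T, w e, T, hTnd, hTconn, hTcard, rfl⟩ ?_
    rintro v ⟨T', hT'nd, hT'conn, hT'card, rfl⟩
    have hpt : ∀ t ∈ Set.Ioi (0:ℝ), indSum w T t ≤ indSum w T' t := by
      intro t ht
      have h1 := hTid t ht
      have h2 := pointwise_lower w hw T' hT'conn ht
      linarith
    have hint := MeasureTheory.setIntegral_mono_on (integrableOn_indSum w T)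
      (integrableOn_indSum w T') measurableSet_Ioi hpt
    rw [integral_indSum w hw T, integral_indSum w hw T'] at hint
    rw [← Finset.sum_div, ← Finset.sum_div] at hint
    linarith

end J

section K

lemma wdist_nonneg {V : Type*} (G : SimpleGraph V) (c : Sym2 V → ℝ)
    (hc : ∀ e ∈ G.edgeSet, 0 < c e) (e : Sym2 V) : 0 ≤ wdist G c e := by
  induction e using Sym2.ind with
  | _ x y =>
  show 0 ≤ sInf _
  apply Real.sInf_nonneg
  rintro d (⟨p, rfl⟩ | ⟨p, rfl⟩) <;>
  · apply List.sum_nonneg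
    intro r hr
    obtain ⟨e, he, rfl⟩ := List.mem_map.1 hr
    exact (hc e (p.edges_subset_edgeSet he)).le

lemma restrictDist_nonneg {V : Type*} (G : SimpleGraph V) (c : Sym2 V → ℝ)
    (hc : ∀ e ∈ G.edgeSet, 0 < c e) (R : Finset V) (e : Sym2 {v : V // v ∈ R}) :
    0 ≤ restrictDist G c R e := by
  induction e using Sym2.ind with
  | _ x y =>
    show 0 ≤ wdist G c s((x : V), (y : V))
    exact wdist_nonneg G c hc _

/-- For the canonical merge plan `M` of a Steiner tree instance
`(G, c, R)` and every nonempty terminal set `X ⊆ R`,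
`drop_G(X) = TMST_G - TMST_{G/X} = 2 · value(M, X)`. -/
theorem drop_eq_two_mul_localValue {V : Type*} [Fintype V]
    (G : SimpleGraph V) (hG : G.Connected)
    (c : Sym2 V → ℝ) (hc : ∀ e ∈ G.edgeSet, 0 < c e)
    (R : Finset V) (hR : R.Nonempty)
    (M : MergePlan {v : V // v ∈ R})
    (hM : ∀ x y : {v : V // v ∈ R}, x ≠ y →
      M.mergeTime x y = minimax (fun e => restrictDist G c R e / 2) x y)
    (X : Set {v : V // v ∈ R}) (hX : X.Nonempty) :
    dropCost (restrictDist G c R) X = 2 * M.localValue X := by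
  classical
  haveI : Nonempty {v : V // v ∈ R} := by obtain ⟨x, hx⟩ := hR; exact ⟨⟨x, hx⟩⟩
  set w := restrictDist G c R with hwdef
  have hw : ∀ e, 0 ≤ w e := restrictDist_nonneg G c hc R
  set u := fun e => w e / 2 with hudef
  have hu : ∀ e, 0 ≤ u e := wHalf_nonneg hw
  -- the merge plan's relation agrees with the threshold setoid for t > 0
  have hsetoid : ∀ t : ℝ, 0 < t → M.rel t = thSetoid u hu t := by
    intro t ht
    apply Setoid.ext
    intro x y
    by_cases hxy : x = y
    · subst hxy
      constructor
      · intro _; exact Or.inl rfl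
      · intro _; exact (M.rel t).iseqv.refl x
    · have h := M.rel_iff t x y hxy
      have hMt : M.mergeTime x y = minimax u x y := hM x y hxy
      constructor
      · intro hr
        refine Or.inr ?_
        by_contra hnlt
        have hle : t ≤ M.mergeTime x y := by rw [hMt]; exact not_lt.1 hnlt
        exact (h.2 ⟨ht.le, hle⟩) hr
      · rintro (rfl | hlt)
        · exact (M.rel t).iseqv.refl x
        · by_contra hnr
          have hle := (h.1 hnr).2
          rw [hMt] at hle
          exact absurd hlt (not_lt.2 hle)
  -- the minimum spanning trees
  obtain ⟨T, hTnd, hTconn, hTcard, hTid⟩ :=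
    main_tree (Nat.card {v : V // v ∈ R}) {v : V // v ∈ R} rfl w hw
  set σX := contractSetoid X with hσX
  haveI : Nonempty (Quotient σX) := Nonempty.map (Quotient.mk σX) ‹Nonempty {v : V // v ∈ R}›
  set w2 := quotCost w σX with hw2def
  have hw2 : ∀ e, 0 ≤ w2 e := quotCost_nonneg w σX hw
  obtain ⟨T2, hT2nd, hT2conn, hT2card, hT2id⟩ :=
    main_tree (Nat.card (Quotient σX)) (Quotient σX) rfl w2 hw2
  have hmst1 : mstCost w = ∑ e ∈ T, w e := mst_eq w hw T hTnd hTconn hTcard hTid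
  have hmst2 : mstCost w2 = ∑ e ∈ T2, w2 e := mst_eq w2 hw2 T2 hT2nd hT2conn hT2card hT2id
  -- pointwise identity for the local value integrand
  have hpoint : ∀ t ∈ Set.Ioi (0:ℝ),
      ((Set.ncard (Quotient.mk (M.rel t) '' X) : ℝ) - 1) =
      indSum w T t - indSum w2 T2 t := by
    intro t ht
    rw [Set.mem_Ioi] at ht
    have hcongr : Set.ncard (Quotient.mk (M.rel t) '' X) =
        Set.ncard (Quotient.mk (thSetoid u hu t) '' X) :=
      congrArg (fun σ : Setoid {v : V // v ∈ R} => Set.ncard (Quotient.mk σ '' X)) (hsetoid t ht)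
    rw [hcongr]
    have hcount := count_join u hu t (Y := X) hX
    have hjoin : Nat.card (Quotient (joinSetoid u hu t X))
        = Nat.card (Quotient (thSetoid (quotCost u σX) (quotCost_nonneg u σX hu) t)) :=
      card_join_eq u hu t X
    have hqups : (fun e => w2 e / 2) = quotCost u σX :=
      funext fun e => (quotCost_half w σX e hw).symm
    have hN2 : Nat.card (Quotient (thSetoid (fun e => w2 e / 2) (wHalf_nonneg hw2) t))
        = Nat.card (Quotient (thSetoid (quotCost u σX) (quotCost_nonneg u σX hu) t)) :=
      card_quot_congr (thSetoid_congr t hqups)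
    have h2 := hT2id t ht
    have h1 : (Nat.card (Quotient (thSetoid u hu t)) : ℝ) = indSum w T t + 1 := hTid t ht
    have hc2 : (Nat.card (Quotient (thSetoid u hu t)) : ℝ) + 1 =
        (Nat.card (Quotient (thSetoid (fun e => w2 e / 2) (wHalf_nonneg hw2) t)) : ℝ) +
        (Set.ncard (Quotient.mk (thSetoid u hu t) '' X) : ℝ) := by
      rw [hN2, ← hjoin]
      exact_mod_cast congrArg (fun n : ℕ => (n : ℝ)) hcount
    linarith [h1, h2, hc2]
  -- compute the integral
  have hlv : M.localValue X = ∫ t in Set.Ioi (0:ℝ), (indSum w T t - indSum w2 T2 t) := by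
    unfold MergePlan.localValue
    exact MeasureTheory.setIntegral_congr_fun measurableSet_Ioi hpoint
  have hsplit : ∫ t in Set.Ioi (0:ℝ), (indSum w T t - indSum w2 T2 t) =
      (∫ t in Set.Ioi (0:ℝ), indSum w T t) - ∫ t in Set.Ioi (0:ℝ), indSum w2 T2 t :=
    MeasureTheory.integral_sub (integrableOn_indSum w T) (integrableOn_indSum w2 T2)
  rw [hlv, hsplit, integral_indSum w hw T, integral_indSum w2 hw2 T2]
  unfold dropCost
  rw [← hσX, ← hw2def, hmst1, hmst2, ← Finset.sum_div, ← Finset.sum_div]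
  ring

end K
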